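/- Let c : ℝ → ℝ be continuous with c(x) > 0 for all x. If V, E : ℝ → ℝ are continuously differentiable and satisfy the stationary Euler–Poisson relations V(x)·V'(x) = −E(x) and V(x)·E'(x) = c(x)·V(x) for all x ∈ ℝ, then V(x) = 0 and E(x) = 0 for all x ∈ ℝ. In other words, the zero equilibrium is the only smooth stationary solution. -/

import Mathlib

/-- The zero equilibrium is the only smooth stationary solution of the 1D
repulsive Euler–Poisson system with positive doping profile: if
`V V' = -E` and `V E' = c V` on ℝ with `c > 0`, then `V ≡ 0` and `E ≡ 0`. -/
theorem stationary_solution_trivial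
    (c : ℝ → ℝ) (hc : Continuous c) (hcpos : ∀ x, 0 < c x)
    (V E : ℝ → ℝ) (hV : ContDiff ℝ 1 V) (hE : ContDiff ℝ 1 E)
    (h1 : ∀ x : ℝ, V x * deriv V x = -E x)
    (h2 : ∀ x : ℝ, V x * deriv E x = c x * V x) :
    ∀ x : ℝ, V x = 0 ∧ E x = 0 := by
  have hVd : Differentiable ℝ V := hV.differentiable one_ne_zero
  have hEd : Differentiable ℝ E := hE.differentiable one_ne_zero
  set F : ℝ → ℝ := fun y => V y * V y / 2 with hFdef
  have hFd : ∀ x, HasDerivAt F (-E x) x := by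
    intro x
    have h := (hVd x).hasDerivAt
    have h' := (h.mul h).div_const 2
    refine h'.congr_deriv ?_
    rw [← h1 x]; ring
  have hFnn : ∀ x, 0 ≤ F x := fun x => by
    have : 0 ≤ V x * V x := mul_self_nonneg _
    simp only [hFdef]; linarith
  -- wherever V vanishes, E vanishes
  have key0 : ∀ x, V x = 0 → E x = 0 := by
    intro x hx
    have hFx : F x = 0 := by simp [hFdef, hx]
    have hmin : IsLocalMin F x :=
      Filter.Eventually.of_forall (fun y => by rw [hFx]; exact hFnn y)
    have := hmin.hasDerivAt_eq_zero (hFd x)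
    linarith
  have keyE : ∀ x, E x ≠ 0 → deriv E x = c x := by
    intro x hx
    have hVx : V x ≠ 0 := fun h => hx (key0 x h)
    have h := h2 x
    have : V x * deriv E x = V x * c x := by rw [h]; ring
    exact mul_left_cancel₀ hVx this
  -- E is identically zero
  have hE0 : ∀ x, E x = 0 := by
    intro x₀
    by_contra hne
    rcases lt_or_gt_of_ne hne with hneg | hpos
    · -- case E x₀ < 0
      set S : Set ℝ := {x | x ≤ x₀ ∧ 0 ≤ E x} with hSdef
      by_cases hS : S.Nonempty
      · have hSc : IsClosed S := by
          have : S = Set.Iic x₀ ∩ {x | 0 ≤ E x} := by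
            ext y; simp [hSdef, Set.mem_Iic]
          rw [this]
          exact isClosed_Iic.inter (isClosed_le continuous_const hE.continuous)
        have hbdd : BddAbove S := ⟨x₀, fun y hy => hy.1⟩
        have haS : sSup S ∈ S := hSc.csSup_mem hS hbdd
        set a := sSup S with hadef
        have ha1 : a ≤ x₀ := haS.1
        have ha2 : 0 ≤ E a := haS.2
        have hax : a < x₀ := lt_of_le_of_ne ha1 (fun h => by
          rw [h] at ha2; linarith)
        have hmono : StrictMonoOn E (Set.Icc a x₀) := by
          apply strictMonoOn_of_deriv_pos (convex_Icc a x₀)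
            hE.continuous.continuousOn
          intro x hx
          rw [interior_Icc] at hx
          have hxS : x ∉ S := fun hmem => absurd (le_csSup hbdd hmem) (not_le.mpr hx.1)
          have hEx : E x < 0 := by
            by_contra h
            exact hxS ⟨hx.2.le, not_lt.mp h⟩
          rw [keyE x (ne_of_lt hEx)]
          exact hcpos x
        have := hmono (Set.left_mem_Icc.mpr hax.le) (Set.right_mem_Icc.mpr hax.le) hax
        linarith
      · -- E < 0 on all of Iic x₀
        have hall : ∀ x ≤ x₀, E x < 0 := by
          intro x hx
          by_contra h
          exact hS ⟨x, hx, not_lt.mp h⟩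
        have hmonoE : MonotoneOn E (Set.Iic x₀) := by
          apply monotoneOn_of_deriv_nonneg (convex_Iic x₀)
            hE.continuous.continuousOn hEd.differentiableOn
          intro x hx
          rw [interior_Iic] at hx
          rw [keyE x (ne_of_lt (hall x hx.le))]
          exact (hcpos x).le
        set G : ℝ → ℝ := fun y => F y + E x₀ * y with hGdef
        have hGd : ∀ x, HasDerivAt G (-E x + E x₀) x := by
          intro x
          have h2' : HasDerivAt (fun y : ℝ => E x₀ * y) (E x₀ * 1) x :=
            (hasDerivAt_id x).const_mul (E x₀)
          have := (hFd x).add h2'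
          exact this.congr_deriv (by ring)
        have hGmono : MonotoneOn G (Set.Iic x₀) := by
          apply monotoneOn_of_deriv_nonneg (convex_Iic x₀)
            (fun x _ => ((hGd x).continuousAt).continuousWithinAt)
            (fun x _ => ((hGd x).differentiableAt).differentiableWithinAt)
          intro x hx
          rw [interior_Iic] at hx
          rw [(hGd x).deriv]
          have := hmonoE (Set.mem_Iic.mpr hx.le) (Set.mem_Iic.mpr le_rfl) hx.le
          linarith
        set δ := -E x₀ with hδdef
        have hδ : 0 < δ := by simp [hδdef]; linarith
        set x := x₀ - (F x₀ + 1) / δ with hxdef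
        have hxle : x ≤ x₀ := by
          have : 0 ≤ (F x₀ + 1) / δ := div_nonneg (by linarith [hFnn x₀]) hδ.le
          simp [hxdef]; linarith
        have hGle := hGmono (Set.mem_Iic.mpr hxle) (Set.mem_Iic.mpr le_rfl) hxle
        have hcancel : δ * ((F x₀ + 1) / δ) = F x₀ + 1 :=
          mul_div_cancel₀ _ (ne_of_gt hδ)
        have hFx : 0 ≤ F x := hFnn x
        simp only [hGdef, hxdef] at hGle
        have hEδ : E x₀ = -δ := by simp [hδdef]
        rw [hEδ] at hGle
        nlinarith [hGle, hcancel, hFx]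
    · -- case E x₀ > 0
      set S : Set ℝ := {x | x₀ ≤ x ∧ E x ≤ 0} with hSdef
      by_cases hS : S.Nonempty
      · have hSc : IsClosed S := by
          have : S = Set.Ici x₀ ∩ {x | E x ≤ 0} := by
            ext y; simp [hSdef, Set.mem_Ici]
          rw [this]
          exact isClosed_Ici.inter (isClosed_le hE.continuous continuous_const)
        have hbdd : BddBelow S := ⟨x₀, fun y hy => hy.1⟩
        have hbS : sInf S ∈ S := hSc.csInf_mem hS hbdd
        set b := sInf S with hbdef
        have hb1 : x₀ ≤ b := hbS.1
        have hb2 : E b ≤ 0 := hbS.2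
        have hbx : x₀ < b := lt_of_le_of_ne hb1 (fun h => by
          rw [← h] at hb2; linarith)
        have hmono : StrictMonoOn E (Set.Icc x₀ b) := by
          apply strictMonoOn_of_deriv_pos (convex_Icc x₀ b)
            hE.continuous.continuousOn
          intro x hx
          rw [interior_Icc] at hx
          have hxS : x ∉ S := fun hmem => absurd (csInf_le hbdd hmem) (not_le.mpr hx.2)
          have hEx : 0 < E x := by
            by_contra h
            exact hxS ⟨hx.1.le, not_lt.mp h⟩
          rw [keyE x (ne_of_gt hEx)]
          exact hcpos x
        have := hmono (Set.left_mem_Icc.mpr hbx.le) (Set.right_mem_Icc.mpr hbx.le) hbx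
        linarith
      · -- E > 0 on all of Ici x₀
        have hall : ∀ x, x₀ ≤ x → 0 < E x := by
          intro x hx
          by_contra h
          exact hS ⟨x, hx, not_lt.mp h⟩
        have hmonoE : MonotoneOn E (Set.Ici x₀) := by
          apply monotoneOn_of_deriv_nonneg (convex_Ici x₀)
            hE.continuous.continuousOn hEd.differentiableOn
          intro x hx
          rw [interior_Ici] at hx
          rw [keyE x (ne_of_gt (hall x hx.le))]
          exact (hcpos x).le
        set G : ℝ → ℝ := fun y => F y + E x₀ * y with hGdef
        have hGd : ∀ x, HasDerivAt G (-E x + E x₀) x := by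
          intro x
          have h2' : HasDerivAt (fun y : ℝ => E x₀ * y) (E x₀ * 1) x :=
            (hasDerivAt_id x).const_mul (E x₀)
          have := (hFd x).add h2'
          exact this.congr_deriv (by ring)
        have hGanti : AntitoneOn G (Set.Ici x₀) := by
          apply antitoneOn_of_deriv_nonpos (convex_Ici x₀)
            (fun x _ => ((hGd x).continuousAt).continuousWithinAt)
            (fun x _ => ((hGd x).differentiableAt).differentiableWithinAt)
          intro x hx
          rw [interior_Ici] at hx
          rw [(hGd x).deriv]
          have := hmonoE (Set.mem_Ici.mpr le_rfl) (Set.mem_Ici.mpr hx.le) hx.le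
          linarith
        set x := x₀ + (F x₀ + 1) / E x₀ with hxdef
        have hxge : x₀ ≤ x := by
          have : 0 ≤ (F x₀ + 1) / E x₀ := div_nonneg (by linarith [hFnn x₀]) hpos.le
          simp [hxdef]; linarith
        have hGle := hGanti (Set.mem_Ici.mpr le_rfl) (Set.mem_Ici.mpr hxge) hxge
        have hcancel : E x₀ * ((F x₀ + 1) / E x₀) = F x₀ + 1 :=
          mul_div_cancel₀ _ (ne_of_gt hpos)
        have hFx : 0 ≤ F x := hFnn x
        simp only [hGdef, hxdef] at hGle
        nlinarith [hGle, hcancel, hFx]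
  -- conclude
  have hEfun : E = fun _ => 0 := funext hE0
  have hderivE : ∀ x, deriv E x = 0 := by
    rw [hEfun]; intro x; simp
  intro x
  have h := h2 x
  rw [hderivE x] at h
  have hVx : V x = 0 := by
    have hcx := (hcpos x).ne'
    have : c x * V x = 0 := by linarith [h]
    rcases mul_eq_zero.mp this with h' | h'
    · exact absurd h' hcx
    · exact h'
  exact ⟨hVx, hE0 x⟩
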